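/- If a sequence of independent lazy transpositions T_1,…,T_ℓ with parameters (a_1,b_1,p_1),…,(a_ℓ,b_ℓ,p_ℓ) is a transposition shuffle on n elements (i.e., the random permutation obtained by applying T_1 first, then T_2, and so on up to T_ℓ is uniformly distributed on S_n), then the sequence of transpositions (a_1,b_1),…,(a_ℓ,b_ℓ) is a permutation network on n elements; consequently, every transposition shuffle on n elements has length at least log₂(n!). -/

import Mathlib

/-- The permutation of `ℕ` obtained by applying the transpositions in the list
in order (first element of the list applied first). -/
def netPerm (S : List (ℕ × ℕ)) : Equiv.Perm ℕ :=
  (S.map (fun p => Equiv.swap p.1 p.2)).reverse.prod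

/-- `L` is a `t`-reachability network on the ground set `{1, …, n}`:
every entry is a transposition of two distinct points of `{1, …, n}`, and for every
choice of `t` distinct points `x 0, …, x (t-1)` of `{1, …, n}` there is a subsequence
of `L` whose composition (applied in order) maps `j + 1` to `x j` for `0 ≤ j < t`
(i.e. maps the point `j` to `x_j` for `1 ≤ j ≤ t`). -/
def IsReachNet (n t : ℕ) (L : List (ℕ × ℕ)) : Prop :=
  (∀ p ∈ L, p.1 ∈ Finset.Icc 1 n ∧ p.2 ∈ Finset.Icc 1 n ∧ p.1 ≠ p.2) ∧
  ∀ x : Fin t → ℕ, (∀ j, x j ∈ Finset.Icc 1 n) → Function.Injective x →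
    ∃ S : List (ℕ × ℕ), S.Sublist L ∧ ∀ j : Fin t, netPerm S (j.val + 1) = x j

/-- `L` is a permutation network on the ground set `{1, …, n}`: every entry is a
transposition of two distinct points of `{1, …, n}`, and every permutation of
`{1, …, n}` (i.e. every permutation of `ℕ` fixing the complement of `{1, …, n}`)
is the composition, in order, of some subsequence of `L`. -/
def IsPermNet (n : ℕ) (L : List (ℕ × ℕ)) : Prop :=
  (∀ p ∈ L, p.1 ∈ Finset.Icc 1 n ∧ p.2 ∈ Finset.Icc 1 n ∧ p.1 ≠ p.2) ∧
  ∀ σ : Equiv.Perm ℕ, (∀ x : ℕ, x ∉ Finset.Icc 1 n → σ x = x) →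
    ∃ S : List (ℕ × ℕ), S.Sublist L ∧ netPerm S = σ

/-- Given a list of lazy transpositions `(a, b, p)` and a choice `f` of which of them
fire, the resulting permutation (the list is applied in order, first entry first). -/
def lazyOutcome (L : List (ℕ × ℕ × ℝ)) (f : Fin L.length → Bool) : Equiv.Perm ℕ :=
  (List.ofFn (fun i : Fin L.length =>
    if f i then Equiv.swap (L.get i).1 (L.get i).2.1 else 1)).reverse.prod

/-- The probability that exactly the lazy transpositions selected by `f` fire
(the lazy transpositions being independent). -/
def lazyWeight (L : List (ℕ × ℕ × ℝ)) (f : Fin L.length → Bool) : ℝ :=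
  ∏ i : Fin L.length, if f i then (L.get i).2.2 else 1 - (L.get i).2.2

/-- The entries of `L` are genuine lazy transpositions on `{1, …, n}`:
distinct points `a ≠ b` of `{1, …, n}` together with a probability `p ∈ [0,1]`. -/
def ValidLazy (n : ℕ) (L : List (ℕ × ℕ × ℝ)) : Prop :=
  ∀ p ∈ L, p.1 ∈ Finset.Icc 1 n ∧ p.2.1 ∈ Finset.Icc 1 n ∧ p.1 ≠ p.2.1 ∧
    0 ≤ p.2.2 ∧ p.2.2 ≤ 1

/-- `L` is a 2-uniformity network on `{1, …, n}`: for every ordered pair `(x, y)` of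
distinct points of `{1, …, n}`, the probability that the composition of the
independent lazy transpositions maps `1 ↦ x` and `2 ↦ y` is `1/(n(n-1))`. -/
def IsUnif2Net (n : ℕ) (L : List (ℕ × ℕ × ℝ)) : Prop :=
  ValidLazy n L ∧
  ∀ x y : ℕ, x ∈ Finset.Icc 1 n → y ∈ Finset.Icc 1 n → x ≠ y →
    (∑ f : Fin L.length → Bool,
      if lazyOutcome L f 1 = x ∧ lazyOutcome L f 2 = y then lazyWeight L f else 0)
      = 1 / ((n : ℝ) * ((n : ℝ) - 1))

open Classical in
/-- `L` is a transposition shuffle on `{1, …, n}`: the composition of the independent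
lazy transpositions of `L`, applied in order, is uniformly distributed over the
permutations of `{1, …, n}` (i.e. every permutation of `ℕ` fixing the complement of
`{1, …, n}` occurs with probability `1/n!`). -/
def IsShuffle (n : ℕ) (L : List (ℕ × ℕ × ℝ)) : Prop :=
  ValidLazy n L ∧
  ∀ σ : Equiv.Perm ℕ, (∀ x : ℕ, x ∉ Finset.Icc 1 n → σ x = x) →
    (∑ f : Fin L.length → Bool,
      if lazyOutcome L f = σ then lazyWeight L f else 0)
      = 1 / (Nat.factorial n : ℝ)

/-- **Transposition shuffles give permutation networks.** If a sequence of independent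
lazy transpositions with parameters `(a_k, b_k, p_k)` is a transposition shuffle on
`n` elements, then the underlying sequence of transpositions `(a_k, b_k)` is a
permutation network on `n` elements; consequently every transposition shuffle on `n`
elements has length at least `log₂ (n!)`. -/
private lemma revprod_filter {m : ℕ} (f : Fin m → Bool) (s : Fin m → Equiv.Perm ℕ)
    (l : List (Fin m)) :
    ((l.filter (fun i => f i)).map s).reverse.prod
      = (l.map (fun i => if f i then s i else 1)).reverse.prod := by
  induction l with
  | nil => rfl
  | cons a t ih =>
    by_cases h : f a <;>
      simp [List.filter_cons, h, List.reverse_cons, List.prod_append, ih]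

private lemma exists_outcome (n : ℕ) (L : List (ℕ × ℕ × ℝ)) (hL : IsShuffle n L)
    (σ : Equiv.Perm ℕ) (hσ : ∀ x : ℕ, x ∉ Finset.Icc 1 n → σ x = x) :
    ∃ f : Fin L.length → Bool, lazyOutcome L f = σ := by
  classical
  by_contra h
  push_neg at h
  have h2 := hL.2 σ hσ
  rw [Finset.sum_eq_zero (fun f _ => by simp [h f])] at h2
  have hf : (0:ℝ) < 1 / (Nat.factorial n : ℝ) := by positivity
  rw [← h2] at hf
  exact lt_irrefl _ hf

private lemma card_bound (n m : ℕ)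
    (F : Equiv.Perm {x : ℕ // x ∈ Finset.Icc 1 n} → (Fin m → Bool))
    (hF : Function.Injective F) : Nat.factorial n ≤ 2 ^ m := by
  haveI : Fintype {x : ℕ // x ∈ Finset.Icc 1 n} := FinsetCoe.fintype _
  have c1 : Nat.card (Equiv.Perm {x : ℕ // x ∈ Finset.Icc 1 n})
      = Nat.factorial n := by
    rw [Nat.card_eq_fintype_card, Fintype.card_perm, Fintype.card_coe, Nat.card_Icc]
    simp
  have c2 : Nat.card (Equiv.Perm {x : ℕ // x ∈ Finset.Icc 1 n})
      ≤ Nat.card (Fin m → Bool) := Nat.card_le_card_of_injective F hF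
  have c3 : Nat.card (Fin m → Bool) = 2 ^ m := by
    rw [Nat.card_eq_fintype_card]
    simp
  omega

private lemma outcome_eq_netPerm (L : List (ℕ × ℕ × ℝ)) (f : Fin L.length → Bool) :
    ∃ S : List (ℕ × ℕ), S.Sublist (L.map (fun q => (q.1, q.2.1))) ∧
      netPerm S = lazyOutcome L f := by
  classical
  refine ⟨((List.finRange L.length).filter (fun i => f i)).map
      (fun i => ((L.get i).1, (L.get i).2.1)), ?_, ?_⟩
  · have hmap : L.map (fun q => (q.1, q.2.1))
        = (List.finRange L.length).map (fun i => ((L.get i).1, (L.get i).2.1)) := by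
      conv_lhs => rw [← List.ofFn_get L]
      rw [List.map_ofFn, List.ofFn_eq_map]
      rfl
    rw [hmap]
    exact List.filter_sublist.map _
  · have := revprod_filter f (fun i => Equiv.swap (L.get i).1 (L.get i).2.1)
      (List.finRange L.length)
    simp only [netPerm, lazyOutcome, List.ofFn_eq_map, List.map_map]
    exact this

theorem shuffle_gives_permutation_network (n : ℕ) (L : List (ℕ × ℕ × ℝ))
    (hL : IsShuffle n L) :
    IsPermNet n (L.map (fun q => (q.1, q.2.1))) ∧
    Real.logb 2 (Nat.factorial n : ℝ) ≤ (L.length : ℝ) := by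
  classical
  constructor
  · constructor
    · intro p hp
      simp only [List.mem_map] at hp
      obtain ⟨q, hq, rfl⟩ := hp
      obtain ⟨h1, h2, h3, _⟩ := hL.1 q hq
      exact ⟨h1, h2, h3⟩
    · intro σ hσ
      obtain ⟨f, hf⟩ := exists_outcome n L hL σ hσ
      obtain ⟨S, hS1, hS2⟩ := outcome_eq_netPerm L f
      exact ⟨S, hS1, hS2.trans hf⟩
  · -- cardinality bound
    have hext : ∀ σ : Equiv.Perm {x : ℕ // x ∈ Finset.Icc 1 n},
        ∀ x : ℕ, x ∉ Finset.Icc 1 n →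
          (σ.extendDomain (Equiv.refl {x : ℕ // x ∈ Finset.Icc 1 n})) x = x := by
      intro σ x hx
      exact Equiv.Perm.extendDomain_apply_not_subtype _ _ hx
    have key : ∀ σ : Equiv.Perm {x : ℕ // x ∈ Finset.Icc 1 n},
        ∃ f : Fin L.length → Bool,
          lazyOutcome L f = σ.extendDomain (Equiv.refl _) :=
      fun σ => exists_outcome n L hL _ (hext σ)
    have hinj : Function.Injective
        (fun σ : Equiv.Perm {x : ℕ // x ∈ Finset.Icc 1 n} =>
          Classical.choose (key σ)) := by
      intro σ τ h
      have h1 := Classical.choose_spec (key σ)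
      have h2 := Classical.choose_spec (key τ)
      have heq : σ.extendDomain (Equiv.refl {x : ℕ // x ∈ Finset.Icc 1 n})
          = τ.extendDomain (Equiv.refl _) := by
        rw [← h1, ← h2]
        simp only at h
        rw [h]
      ext a
      have e1 := Equiv.Perm.extendDomain_apply_subtype σ
        (Equiv.refl {x : ℕ // x ∈ Finset.Icc 1 n}) a.2
      have e2 := Equiv.Perm.extendDomain_apply_subtype τ
        (Equiv.refl {x : ℕ // x ∈ Finset.Icc 1 n}) a.2
      rw [heq] at e1
      rw [e1] at e2
      simpa using e2
    have hcard : Nat.factorial n ≤ 2 ^ L.length := card_bound n L.length _ hinj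
    have hfpos : (0:ℝ) < (Nat.factorial n : ℝ) := by
      exact_mod_cast Nat.factorial_pos n
    have h2 : (Nat.factorial n : ℝ) ≤ (2:ℝ) ^ L.length := by exact_mod_cast hcard
    calc Real.logb 2 (Nat.factorial n : ℝ)
        ≤ Real.logb 2 ((2:ℝ) ^ L.length) :=
          Real.logb_le_logb_of_le one_lt_two hfpos h2
      _ = (L.length : ℝ) := by
          rw [Real.logb_pow, Real.logb_self_eq_one one_lt_two, mul_one]
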